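/- arXiv:2309.04819 — 2 statements merged into one kernel-verified Lean document; each statement's English description precedes it below -/
import Mathlib

section
/- Let A = (E, {M_k}_{k∈O}) be a quantum algorithm on a d-dimensional space, ε ≥ 0, and 0 ≤ η ≤ 1. Then A is ε-differentially private within η if and only if for every subset S ⊆ O, η·λ_max(M_S) ≤ (e^ε + η − 1)·λ_min(M_S), where M_S = ∑_{k∈S} E†(M_k). (Equivalently, ε ≥ ln[(κ*−1)η+1] where κ* = max_{S⊆O} λ_max(M_S)/λ_min(M_S), with the convention that the ratio is +∞ if λ_min(M_S) = 0 < λ_max(M_S).) -/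
open Matrix BigOperators
open scoped ComplexOrder

namespace QDP

variable {n : Type*} [Fintype n] [DecidableEq n]

/-- The square root `Matrix.PosSemidef.sqrt` of the older Mathlib (removed since), with its old definition. -/
noncomputable def psdSqrt {A : Matrix n n ℂ} (hA : A.PosSemidef) : Matrix n n ℂ :=
  hA.1.eigenvectorUnitary.1 * diagonal ((↑) ∘ (√·) ∘ hA.1.eigenvalues) *
  (star hA.1.eigenvectorUnitary : Matrix n n ℂ)

/-- Trace distance `D(ρ,σ) = (1/2) tr |ρ - σ|`, where `|A| = sqrt (Aᴴ A)`. -/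
noncomputable def traceDist (ρ σ : Matrix n n ℂ) : ℝ :=
  (1 / 2 : ℝ) * ((psdSqrt (Matrix.posSemidef_conjTranspose_mul_self (ρ - σ))).trace).re

/-- A density matrix: positive semidefinite with trace one. -/
def IsDensity (ρ : Matrix n n ℂ) : Prop := ρ.PosSemidef ∧ ρ.trace = 1

/-- The largest eigenvalue of a (Hermitian) matrix. -/
noncomputable def lamMax (M : Matrix n n ℂ) : ℝ :=
  if h : M.IsHermitian then ⨆ i, h.eigenvalues i else 0

/-- The smallest eigenvalue of a (Hermitian) matrix. -/
noncomputable def lamMin (M : Matrix n n ℂ) : ℝ :=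
  if h : M.IsHermitian then ⨅ i, h.eigenvalues i else 0

/-- Application of a quantum channel given by Kraus matrices. -/
noncomputable def applyChan {ι : Type*} [Fintype ι] (E : ι → Matrix n n ℂ)
    (ρ : Matrix n n ℂ) : Matrix n n ℂ := ∑ j, E j * ρ * (E j)ᴴ

/-- The dual of a quantum channel given by Kraus matrices. -/
noncomputable def dualChan {ι : Type*} [Fintype ι] (E : ι → Matrix n n ℂ)
    (M : Matrix n n ℂ) : Matrix n n ℂ := ∑ j, (E j)ᴴ * M * E j

/-- `(ε,δ)`-differential privacy within `η` of the quantum algorithm `(E, M)`. -/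
def IsDP {ι : Type*} [Fintype ι] {O : Type*} [Fintype O]
    (E : ι → Matrix n n ℂ) (M : O → Matrix n n ℂ) (ε δ η : ℝ) : Prop :=
  ∀ ρ σ : Matrix n n ℂ, IsDensity ρ → IsDensity σ → traceDist ρ σ ≤ η →
    ∀ S : Finset O,
      (∑ k ∈ S, (M k * applyChan E ρ).trace).re ≤
        Real.exp ε * (∑ k ∈ S, (M k * applyChan E σ).trace).re + δ

/-- Rank-one projection `|ψ⟩⟨ψ|`. -/
noncomputable def proj (ψ : n → ℂ) : Matrix n n ℂ := vecMulVec ψ (star ψ)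

end QDP

namespace QDPAux

open QDP

variable {n : Type*} [Fintype n] [DecidableEq n]

lemma star_mul_self_eq (z : ℂ) : star z * z = (Complex.normSq z : ℂ) := by
  rw [RCLike.star_def, mul_comm, Complex.mul_conj]

/-- quadratic form decomposition along spectral basis -/
lemma quad_decomp {N : Matrix n n ℂ} (hN : N.IsHermitian) (x : n → ℂ) :
    star x ⬝ᵥ (N *ᵥ x) =
      ∑ i, (hN.eigenvalues i : ℂ) *
        (star ((hN.eigenvectorUnitary : Matrix n n ℂ)ᴴ *ᵥ x) i
          * ((hN.eigenvectorUnitary : Matrix n n ℂ)ᴴ *ᵥ x) i) := by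
  set U := (hN.eigenvectorUnitary : Matrix n n ℂ) with hUdef
  set c := Uᴴ *ᵥ x with hc
  have h1 : N = U * Matrix.diagonal (RCLike.ofReal ∘ hN.eigenvalues) * Uᴴ := by
    have hst := hN.spectral_theorem
    rw [Unitary.conjStarAlgAut_apply, Matrix.star_eq_conjTranspose] at hst
    exact hst
  calc star x ⬝ᵥ (N *ᵥ x)
      = star x ⬝ᵥ ((U * Matrix.diagonal (RCLike.ofReal ∘ hN.eigenvalues) * Uᴴ) *ᵥ x) := by
        rw [← h1]
    _ = star c ⬝ᵥ (Matrix.diagonal (RCLike.ofReal ∘ hN.eigenvalues) *ᵥ c) := by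
        rw [← Matrix.mulVec_mulVec, ← Matrix.mulVec_mulVec, Matrix.dotProduct_mulVec]
        congr 1
        rw [hc, Matrix.star_mulVec, Matrix.conjTranspose_conjTranspose]
    _ = ∑ i, (hN.eigenvalues i : ℂ) * (star c i * c i) := by
        simp only [dotProduct, Matrix.mulVec_diagonal, Function.comp, Pi.star_apply,
          RCLike.ofReal]
        exact Finset.sum_congr rfl fun i _ => mul_left_comm _ _ _

lemma norm_decomp {N : Matrix n n ℂ} (hN : N.IsHermitian) (x : n → ℂ) :
    star x ⬝ᵥ x =
      ∑ i, (star ((hN.eigenvectorUnitary : Matrix n n ℂ)ᴴ *ᵥ x) i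
          * ((hN.eigenvectorUnitary : Matrix n n ℂ)ᴴ *ᵥ x) i) := by
  set U := (hN.eigenvectorUnitary : Matrix n n ℂ) with hUdef
  set c := Uᴴ *ᵥ x with hc
  have hU1 : U * Uᴴ = 1 := by
    simpa [star_eq_conjTranspose] using (Matrix.mem_unitaryGroup_iff).mp hN.eigenvectorUnitary.2
  calc star x ⬝ᵥ x = star x ⬝ᵥ ((U * Uᴴ) *ᵥ x) := by rw [hU1, Matrix.one_mulVec]
    _ = star c ⬝ᵥ c := by
        rw [← Matrix.mulVec_mulVec, Matrix.dotProduct_mulVec]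
        congr 1
        rw [hc, Matrix.star_mulVec, Matrix.conjTranspose_conjTranspose]
    _ = ∑ i, star c i * c i := rfl

lemma lamMax_eq {N : Matrix n n ℂ} (hN : N.IsHermitian) :
    lamMax N = ⨆ i, hN.eigenvalues i := dif_pos hN

lemma lamMin_eq {N : Matrix n n ℂ} (hN : N.IsHermitian) :
    lamMin N = ⨅ i, hN.eigenvalues i := dif_pos hN

lemma eig_le_lamMax [Nonempty n] {N : Matrix n n ℂ} (hN : N.IsHermitian) (i : n) :
    hN.eigenvalues i ≤ lamMax N := by
  rw [lamMax_eq hN]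
  exact le_ciSup (Set.Finite.bddAbove (Set.finite_range _)) i

lemma lamMin_le_eig [Nonempty n] {N : Matrix n n ℂ} (hN : N.IsHermitian) (i : n) :
    lamMin N ≤ hN.eigenvalues i := by
  rw [lamMin_eq hN]
  exact ciInf_le (Set.Finite.bddBelow (Set.finite_range _)) i

lemma exists_lamMax [Nonempty n] {N : Matrix n n ℂ} (hN : N.IsHermitian) :
    ∃ i, hN.eigenvalues i = lamMax N := by
  rw [lamMax_eq hN]; exact exists_eq_ciSup_of_finite

lemma exists_lamMin [Nonempty n] {N : Matrix n n ℂ} (hN : N.IsHermitian) :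
    ∃ i, hN.eigenvalues i = lamMin N := by
  rw [lamMin_eq hN]; exact exists_eq_ciInf_of_finite

/-- Rayleigh-type bounds for the quadratic form of a Hermitian matrix at a unit vector. -/
lemma quad_re_bounds [Nonempty n] {N : Matrix n n ℂ} (hN : N.IsHermitian) {x : n → ℂ}
    (hx : star x ⬝ᵥ x = 1) :
    lamMin N ≤ (star x ⬝ᵥ (N *ᵥ x)).re ∧ (star x ⬝ᵥ (N *ᵥ x)).re ≤ lamMax N := by
  set c := (hN.eigenvectorUnitary : Matrix n n ℂ)ᴴ *ᵥ x with hc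
  have h1 : (star x ⬝ᵥ (N *ᵥ x)).re = ∑ i, hN.eigenvalues i * Complex.normSq (c i) := by
    rw [quad_decomp hN x, Complex.re_sum]
    refine Finset.sum_congr rfl fun i _ => ?_
    rw [Pi.star_apply, star_mul_self_eq, ← Complex.ofReal_mul, Complex.ofReal_re]
  have h2 : ∑ i, Complex.normSq (c i) = 1 := by
    have := norm_decomp hN x
    rw [hx] at this
    have := congrArg Complex.re this.symm
    rw [Complex.re_sum] at this
    simpa [star_mul_self_eq, Complex.normSq_apply] using this
  constructor
  · rw [h1]
    calc lamMin N = ∑ i, lamMin N * Complex.normSq (c i) := by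
          rw [← Finset.mul_sum, h2, mul_one]
      _ ≤ ∑ i, hN.eigenvalues i * Complex.normSq (c i) :=
          Finset.sum_le_sum fun i _ =>
            mul_le_mul_of_nonneg_right (lamMin_le_eig hN i) (Complex.normSq_nonneg _)
  · rw [h1]
    calc ∑ i, hN.eigenvalues i * Complex.normSq (c i)
        ≤ ∑ i, lamMax N * Complex.normSq (c i) :=
          Finset.sum_le_sum fun i _ =>
            mul_le_mul_of_nonneg_right (eig_le_lamMax hN i) (Complex.normSq_nonneg _)
      _ = lamMax N := by rw [← Finset.mul_sum, h2, mul_one]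

/-- Trace of `N * Δ` expanded along the spectral decomposition of `Δ`. -/
lemma trace_mul_expand {Δ : Matrix n n ℂ} (hΔ : Δ.IsHermitian) (N : Matrix n n ℂ) :
    (N * Δ).trace = ∑ i, (hΔ.eigenvalues i : ℂ) *
      (star ⇑(hΔ.eigenvectorBasis i) ⬝ᵥ (N *ᵥ ⇑(hΔ.eigenvectorBasis i))) := by
  set U := (hΔ.eigenvectorUnitary : Matrix n n ℂ) with hUdef
  have h1 : Δ = U * Matrix.diagonal (RCLike.ofReal ∘ hΔ.eigenvalues) * Uᴴ := by
    have hst := hΔ.spectral_theorem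
    rw [Unitary.conjStarAlgAut_apply, Matrix.star_eq_conjTranspose] at hst
    exact hst
  have key : ∀ i, (Uᴴ * N * U) i i = star ⇑(hΔ.eigenvectorBasis i) ⬝ᵥ (N *ᵥ ⇑(hΔ.eigenvectorBasis i)) := by
    intro i
    simp only [Matrix.mul_apply, Matrix.conjTranspose_apply, dotProduct, Matrix.mulVec,
      Pi.star_apply, hUdef, Matrix.IsHermitian.eigenvectorUnitary_apply]
    simp only [Finset.sum_mul, Finset.mul_sum]
    rw [Finset.sum_comm]
    exact Finset.sum_congr rfl fun j _ => Finset.sum_congr rfl fun k _ => by ring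
  calc (N * Δ).trace = (N * (U * Matrix.diagonal (RCLike.ofReal ∘ hΔ.eigenvalues) * Uᴴ)).trace := by
        rw [← h1]
    _ = ((Uᴴ * N * U) * Matrix.diagonal (RCLike.ofReal ∘ hΔ.eigenvalues)).trace := by
        rw [show N * (U * Matrix.diagonal (RCLike.ofReal ∘ hΔ.eigenvalues) * Uᴴ)
            = (N * U * Matrix.diagonal (RCLike.ofReal ∘ hΔ.eigenvalues)) * Uᴴ by
          simp only [Matrix.mul_assoc]]
        rw [Matrix.trace_mul_comm]
        simp only [Matrix.mul_assoc]
    _ = ∑ i, (Uᴴ * N * U) i i * (hΔ.eigenvalues i : ℂ) := by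
        simp [Matrix.trace, Matrix.diag, Matrix.mul_apply, Matrix.diagonal, RCLike.ofReal]
    _ = _ := by
        refine Finset.sum_congr rfl fun i _ => ?_
        rw [key i, mul_comm]


lemma basis_dot {Δ : Matrix n n ℂ} (hΔ : Δ.IsHermitian) (i j : n) :
    star ⇑(hΔ.eigenvectorBasis i) ⬝ᵥ ⇑(hΔ.eigenvectorBasis j) = if i = j then 1 else 0 := by
  have h := (orthonormal_iff_ite.mp hΔ.eigenvectorBasis.orthonormal) i j
  rw [EuclideanSpace.inner_eq_star_dotProduct, dotProduct_comm] at h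
  exact h

open scoped MatrixOrder in
lemma psdSqrt_eq_sqrt {A : Matrix n n ℂ} (hA : A.PosSemidef) : psdSqrt hA = CFC.sqrt A := by
  rw [CFC.sqrt_eq_cfc, cfc_nnreal_eq_real _ A hA.nonneg, hA.1.cfc_eq]
  simp only [psdSqrt, IsHermitian.cfc, Unitary.conjStarAlgAut_apply]
  congr 2
  funext i
  congr 1
  congr 1
  funext k
  simp [Function.comp, Real.coe_sqrt, Real.coe_toNNReal', max_eq_left (hA.eigenvalues_nonneg k)]

open scoped MatrixOrder in
lemma traceDist_of_sq {ρ σ R : Matrix n n ℂ} (hR : R.PosSemidef)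
    (h2 : R ^ 2 = (ρ - σ)ᴴ * (ρ - σ)) : traceDist ρ σ = (1 / 2 : ℝ) * (R.trace).re := by
  rw [traceDist, psdSqrt_eq_sqrt,
    CFC.sqrt_unique (b := R) (by rw [← sq]; exact h2) hR.nonneg]

lemma conj_unit_mul {U : Matrix n n ℂ} (hU : Uᴴ * U = 1) (D1 D2 : Matrix n n ℂ) :
    (U * D1 * Uᴴ) * (U * D2 * Uᴴ) = U * (D1 * D2) * Uᴴ := by
  calc (U * D1 * Uᴴ) * (U * D2 * Uᴴ) = U * D1 * (Uᴴ * U) * (D2 * Uᴴ) := by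
        simp only [Matrix.mul_assoc]
    _ = U * (D1 * D2) * Uᴴ := by rw [hU, Matrix.mul_one]; simp only [Matrix.mul_assoc]

lemma traceDist_eq_sum_abs {ρ σ : Matrix n n ℂ} (hΔ : (ρ - σ).IsHermitian) :
    traceDist ρ σ = (1 / 2 : ℝ) * ∑ i, |hΔ.eigenvalues i| := by
  set U := (hΔ.eigenvectorUnitary : Matrix n n ℂ) with hUdef
  have hU : Uᴴ * U = 1 := by
    simpa [star_eq_conjTranspose] using (Matrix.mem_unitaryGroup_iff').mp hΔ.eigenvectorUnitary.2
  set R : Matrix n n ℂ := U * Matrix.diagonal (fun i => ((|hΔ.eigenvalues i| : ℝ) : ℂ)) * Uᴴ with hRdef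
  have hRpsd : R.PosSemidef := by
    refine Matrix.PosSemidef.mul_mul_conjTranspose_same ?_ U
    exact Matrix.posSemidef_diagonal_iff.mpr fun i => by
      exact_mod_cast Complex.zero_le_real.mpr (abs_nonneg _)
  have h1 : ρ - σ = U * Matrix.diagonal (RCLike.ofReal ∘ hΔ.eigenvalues) * Uᴴ := by
    have hst := hΔ.spectral_theorem
    rw [Unitary.conjStarAlgAut_apply, Matrix.star_eq_conjTranspose] at hst
    exact hst
  have hdiag : (fun i => ((|hΔ.eigenvalues i| : ℝ) : ℂ) * ((|hΔ.eigenvalues i| : ℝ) : ℂ))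
      = fun i => (RCLike.ofReal ∘ hΔ.eigenvalues) i * (RCLike.ofReal ∘ hΔ.eigenvalues) i := by
    funext i
    have h2 : (|hΔ.eigenvalues i| : ℝ) * |hΔ.eigenvalues i|
        = hΔ.eigenvalues i * hΔ.eigenvalues i := abs_mul_abs_self _
    calc ((|hΔ.eigenvalues i| : ℝ) : ℂ) * ((|hΔ.eigenvalues i| : ℝ) : ℂ)
        = ((hΔ.eigenvalues i : ℝ) : ℂ) * ((hΔ.eigenvalues i : ℝ) : ℂ) := by
          rw [← Complex.ofReal_mul, ← Complex.ofReal_mul, h2]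
      _ = _ := rfl
  have hsq : R ^ 2 = (ρ - σ)ᴴ * (ρ - σ) := by
    rw [pow_two, hRdef, conj_unit_mul hU, Matrix.diagonal_mul_diagonal, hdiag, hΔ.eq]
    conv_rhs => rw [h1]
    rw [conj_unit_mul hU, Matrix.diagonal_mul_diagonal]
  have htr : R.trace = ∑ i, ((|hΔ.eigenvalues i| : ℝ) : ℂ) := by
    rw [hRdef, Matrix.trace_mul_comm, ← Matrix.mul_assoc, hU, Matrix.one_mul,
      Matrix.trace_diagonal]
  rw [traceDist_of_sq hRpsd hsq, htr]
  congr 1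
  rw [Complex.re_sum]
  exact Finset.sum_congr rfl fun i _ => Complex.ofReal_re _

lemma mulVec_proj (x y : n → ℂ) : proj x *ᵥ y = (star x ⬝ᵥ y) • x := by
  ext i
  simp only [proj, Matrix.mulVec, Matrix.vecMulVec_apply, dotProduct, Pi.smul_apply,
    Pi.star_apply, smul_eq_mul, Finset.sum_mul]
  exact Finset.sum_congr rfl fun j _ => by ring

lemma proj_conjTranspose (x : n → ℂ) : (proj x)ᴴ = proj x := by
  ext i j
  simp only [proj, Matrix.conjTranspose_apply, Matrix.vecMulVec_apply, Pi.star_apply, star_mul',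
    star_star]
  ring

lemma proj_psd (x : n → ℂ) : (proj x).PosSemidef := by
  refine Matrix.PosSemidef.of_dotProduct_mulVec_nonneg (proj_conjTranspose x) fun y => ?_
  rw [mulVec_proj, dotProduct_smul]
  rw [smul_eq_mul, mul_comm, Matrix.star_dotProduct y x, star_mul_self_eq]
  exact Complex.zero_le_real.mpr (Complex.normSq_nonneg _)

lemma trace_proj (x : n → ℂ) : (proj x).trace = star x ⬝ᵥ x := by
  simp only [proj, Matrix.trace, Matrix.diag, Matrix.vecMulVec_apply, dotProduct,
    Pi.star_apply]
  exact Finset.sum_congr rfl fun i _ => mul_comm _ _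

lemma trace_mul_proj (N : Matrix n n ℂ) (x : n → ℂ) :
    (N * proj x).trace = star x ⬝ᵥ (N *ᵥ x) := by
  simp only [Matrix.trace, Matrix.diag, Matrix.mul_apply, proj, Matrix.vecMulVec_apply,
    dotProduct, Matrix.mulVec, Pi.star_apply, Finset.mul_sum]
  exact Finset.sum_congr rfl fun i _ => Finset.sum_congr rfl fun j _ => by ring

lemma proj_mul_proj (x y : n → ℂ) :
    proj x * proj y = (star x ⬝ᵥ y) • Matrix.vecMulVec x (star y) := by
  ext i j
  simp only [proj, Matrix.mul_apply, Matrix.vecMulVec_apply, Matrix.smul_apply, Pi.star_apply,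
    dotProduct, smul_eq_mul, Finset.sum_mul]
  exact Finset.sum_congr rfl fun k _ => by ring

lemma psd_smul {A : Matrix n n ℂ} (hA : A.PosSemidef) {r : ℝ} (hr : 0 ≤ r) :
    ((r : ℂ) • A).PosSemidef := by
  refine Matrix.PosSemidef.of_dotProduct_mulVec_nonneg ?_ fun y => ?_
  · show ((r : ℂ) • A)ᴴ = (r : ℂ) • A
    rw [Matrix.conjTranspose_smul, hA.1, Complex.star_def, Complex.conj_ofReal]
  · rw [Matrix.smul_mulVec, dotProduct_smul, smul_eq_mul]
    exact mul_nonneg (Complex.zero_le_real.mpr hr) (hA.dotProduct_mulVec_nonneg y)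

lemma trace_channel {ι : Type*} [Fintype ι] (E : ι → Matrix n n ℂ) (A ρ : Matrix n n ℂ) :
    (A * applyChan E ρ).trace = (dualChan E A * ρ).trace := by
  simp only [applyChan, dualChan, Matrix.mul_sum, Matrix.sum_mul, Matrix.trace_sum]
  refine Finset.sum_congr rfl fun j _ => ?_
  rw [show A * (E j * ρ * (E j)ᴴ) = (A * E j * ρ) * (E j)ᴴ by simp only [Matrix.mul_assoc],
    Matrix.trace_mul_comm]
  simp only [Matrix.mul_assoc]

lemma dualChan_psd {ι : Type*} [Fintype ι] (E : ι → Matrix n n ℂ) {A : Matrix n n ℂ}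
    (hA : A.PosSemidef) : (dualChan E A).PosSemidef := by
  classical
  unfold dualChan
  refine Finset.sum_induction _ _ (fun a b ha hb => ha.add hb) Matrix.PosSemidef.zero ?_
  exact fun j _ => hA.conjTranspose_mul_mul_same (E j)

end QDPAux

open QDPAux

open QDP in
/-- Theorem (sufficient and necessary condition for `ε`-differential privacy). -/
theorem epsDP_iff_eigenvalue_bound {d : ℕ} (hd : 1 ≤ d) {ι O : Type} [Fintype ι] [Fintype O]
    (E : ι → Matrix (Fin d) (Fin d) ℂ) (hE : ∑ j, (E j)ᴴ * E j = 1)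
    (M : O → Matrix (Fin d) (Fin d) ℂ) (hMpos : ∀ k, (M k).PosSemidef)
    (hMsum : ∑ k, M k = 1)
    (ε η : ℝ) (hε : 0 ≤ ε) (hη0 : 0 ≤ η) (hη1 : η ≤ 1) :
    IsDP E M ε 0 η ↔
      ∀ S : Finset O,
        η * lamMax (∑ k ∈ S, dualChan E (M k)) ≤
          (Real.exp ε + η - 1) * lamMin (∑ k ∈ S, dualChan E (M k)) := by
  have hne : Nonempty (Fin d) := ⟨⟨0, hd⟩⟩
  have hexp1 : (1 : ℝ) ≤ Real.exp ε := by
    calc (1 : ℝ) = Real.exp 0 := Real.exp_zero.symm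
      _ ≤ Real.exp ε := Real.exp_le_exp.mpr hε
  have key : ∀ (S : Finset O) (ρ : Matrix (Fin d) (Fin d) ℂ),
      (∑ k ∈ S, (M k * applyChan E ρ).trace) = ((∑ k ∈ S, dualChan E (M k)) * ρ).trace := by
    intro S ρ
    rw [Finset.sum_mul, Matrix.trace_sum]
    exact Finset.sum_congr rfl fun k _ => trace_channel E (M k) ρ
  have hNpsd : ∀ S : Finset O, (∑ k ∈ S, dualChan E (M k)).PosSemidef := fun S =>
    Finset.sum_induction _ _ (fun a b ha hb => ha.add hb) Matrix.PosSemidef.zero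
      (fun k _ => dualChan_psd E (hMpos k))
  have unitb : ∀ {A : Matrix (Fin d) (Fin d) ℂ} (hA : A.IsHermitian) (i : Fin d),
      star ⇑(hA.eigenvectorBasis i) ⬝ᵥ ⇑(hA.eigenvectorBasis i) = 1 := fun hA i => by
    simpa using basis_dot hA i i
  constructor
  · -- forward direction
    intro hDP S
    set NS : Matrix (Fin d) (Fin d) ℂ := ∑ k ∈ S, dualChan E (M k) with hNS
    have hNSpsd : NS.PosSemidef := hNpsd S
    have hN : NS.IsHermitian := hNSpsd.1
    obtain ⟨i, hi⟩ := exists_lamMax hN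
    obtain ⟨j, hj⟩ := exists_lamMin hN
    have hb0 : 0 ≤ lamMin NS := by rw [← hj]; exact hNSpsd.eigenvalues_nonneg j
    have hba : lamMin NS ≤ lamMax NS := by
      rw [← hj]; exact eig_le_lamMax hN j
    by_cases hij : i = j
    · have hab : lamMax NS = lamMin NS := by rw [← hi, ← hj, hij]
      rw [hab]
      nlinarith
    · set u := ⇑(hN.eigenvectorBasis i) with hu
      set v := ⇑(hN.eigenvectorBasis j) with hv
      have huu : star u ⬝ᵥ u = 1 := unitb hN i
      have hvv : star v ⬝ᵥ v = 1 := unitb hN j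
      have huv : star u ⬝ᵥ v = 0 := by simpa [hij] using basis_dot hN i j
      have hvu : star v ⬝ᵥ u = 0 := by
        simpa [(Ne.symm hij : j ≠ i)] using basis_dot hN j i
      have hTu : (NS * proj u).trace = ((lamMax NS : ℝ) : ℂ) := by
        rw [trace_mul_proj, hN.mulVec_eigenvectorBasis i, dotProduct_smul, ← hu, huu, hi]
        simp [Complex.real_smul]
      have hTv : (NS * proj v).trace = ((lamMin NS : ℝ) : ℂ) := by
        rw [trace_mul_proj, hN.mulVec_eigenvectorBasis j, dotProduct_smul, ← hv, hvv, hj]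
        simp [Complex.real_smul]
      set ρ : Matrix (Fin d) (Fin d) ℂ :=
        ((η : ℝ) : ℂ) • proj u + (((1 - η : ℝ)) : ℂ) • proj v with hρdef
      set σ : Matrix (Fin d) (Fin d) ℂ := proj v with hσdef
      have hρden : IsDensity ρ := by
        refine ⟨(psd_smul (proj_psd u) hη0).add (psd_smul (proj_psd v) (by linarith)), ?_⟩
        rw [hρdef, Matrix.trace_add, Matrix.trace_smul, Matrix.trace_smul, trace_proj,
          trace_proj, huu, hvv]
        simp only [smul_eq_mul, mul_one]
        push_cast
        ring
      have hσden : IsDensity σ := ⟨proj_psd v, by rw [hσdef, trace_proj, hvv]⟩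
      have hcast : (((1 - η : ℝ)) : ℂ) = 1 - ((η : ℝ) : ℂ) := by push_cast; ring
      have hsub : ρ - σ = ((η : ℝ) : ℂ) • (proj u - proj v) := by
        rw [hρdef, hσdef, hcast, smul_sub]
        module
      have hPuPu : proj u * proj u = proj u := by
        rw [proj_mul_proj, huu, one_smul]; rfl
      have hPvPv : proj v * proj v = proj v := by
        rw [proj_mul_proj, hvv, one_smul]; rfl
      have hPuPv : proj u * proj v = 0 := by rw [proj_mul_proj, huv, zero_smul]
      have hPvPu : proj v * proj u = 0 := by rw [proj_mul_proj, hvu, zero_smul]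
      have hPP : (proj u + proj v) * (proj u + proj v) = proj u + proj v := by
        rw [add_mul, mul_add, mul_add, hPuPu, hPvPv, hPuPv, hPvPu]
        abel
      have hMM : (proj u - proj v) * (proj u - proj v) = proj u + proj v := by
        rw [sub_mul, mul_sub, mul_sub, hPuPu, hPvPv, hPuPv, hPvPu]
        abel
      have hherm : (ρ - σ)ᴴ = ρ - σ := by
        rw [hsub, Matrix.conjTranspose_smul, Matrix.conjTranspose_sub, proj_conjTranspose,
          proj_conjTranspose, Complex.star_def, Complex.conj_ofReal]
      set R : Matrix (Fin d) (Fin d) ℂ := ((η : ℝ) : ℂ) • (proj u + proj v) with hRdef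
      have hRpsd : R.PosSemidef := psd_smul ((proj_psd u).add (proj_psd v)) hη0
      have hsq : R ^ 2 = (ρ - σ)ᴴ * (ρ - σ) := by
        rw [pow_two, hRdef, Matrix.smul_mul, Matrix.mul_smul, hPP, smul_smul,
          hherm, hsub, Matrix.smul_mul, Matrix.mul_smul, hMM, smul_smul]
      have hdist : traceDist ρ σ = η := by
        rw [traceDist_of_sq hRpsd hsq, hRdef, Matrix.trace_smul, Matrix.trace_add,
          trace_proj, trace_proj, huu, hvv]
        simp
        ring
      have hDP' := hDP ρ σ hρden hσden (le_of_eq hdist) S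
      rw [key S ρ, key S σ, ← hNS] at hDP'
      have hNρ : (NS * ρ).trace = ((η : ℝ) : ℂ) * ((lamMax NS : ℝ) : ℂ)
          + (((1 - η : ℝ)) : ℂ) * ((lamMin NS : ℝ) : ℂ) := by
        rw [hρdef, mul_add, Matrix.mul_smul, Matrix.mul_smul, Matrix.trace_add,
          Matrix.trace_smul, Matrix.trace_smul, hTu, hTv]
        simp [smul_eq_mul]
      have hNσ : (NS * σ).trace = ((lamMin NS : ℝ) : ℂ) := by rw [hσdef, hTv]
      rw [hNρ, hNσ] at hDP'
      have h1 : (((η : ℝ) : ℂ) * ((lamMax NS : ℝ) : ℂ)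
          + (((1 - η : ℝ)) : ℂ) * ((lamMin NS : ℝ) : ℂ)).re
          = η * lamMax NS + (1 - η) * lamMin NS := by
        push_cast
        simp [Complex.add_re, Complex.mul_re]
      have h2 : (((lamMin NS : ℝ) : ℂ)).re = lamMin NS := Complex.ofReal_re _
      rw [h1, h2] at hDP'
      linarith
  · -- reverse direction
    intro hcond ρ σ hρ hσ hdist S
    set NS : Matrix (Fin d) (Fin d) ℂ := ∑ k ∈ S, dualChan E (M k) with hNS
    have hNSpsd : NS.PosSemidef := hNpsd S
    have hN : NS.IsHermitian := hNSpsd.1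
    have hkey : η * lamMax NS ≤ (Real.exp ε + η - 1) * lamMin NS := hcond S
    obtain ⟨j, hj⟩ := exists_lamMin hN
    have hb0 : 0 ≤ lamMin NS := by rw [← hj]; exact hNSpsd.eigenvalues_nonneg j
    have hba : lamMin NS ≤ lamMax NS := by rw [← hj]; exact eig_le_lamMax hN j
    have hΔ : (ρ - σ).IsHermitian := hρ.1.1.sub hσ.1.1
    -- trace of N * Δ expansion
    have hNΔ : ((NS * (ρ - σ)).trace).re
        = ∑ i, hΔ.eigenvalues i *
            (star ⇑(hΔ.eigenvectorBasis i) ⬝ᵥ (NS *ᵥ ⇑(hΔ.eigenvectorBasis i))).re := by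
      rw [trace_mul_expand hΔ NS, Complex.re_sum]
      exact Finset.sum_congr rfl fun i _ => Complex.re_ofReal_mul _ _
    have hqb : ∀ i : Fin d,
        lamMin NS ≤ (star ⇑(hΔ.eigenvectorBasis i) ⬝ᵥ (NS *ᵥ ⇑(hΔ.eigenvectorBasis i))).re ∧
        (star ⇑(hΔ.eigenvectorBasis i) ⬝ᵥ (NS *ᵥ ⇑(hΔ.eigenvectorBasis i))).re ≤ lamMax NS :=
      fun i => quad_re_bounds hN (unitb hΔ i)
    -- sum of eigenvalues of Δ is zero
    have hsumeig : ∀ {A : Matrix (Fin d) (Fin d) ℂ} (hA : A.IsHermitian),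
        (A.trace).re = ∑ i, hA.eigenvalues i := by
      intro A hA
      have h1 := trace_mul_expand hA (1 : Matrix (Fin d) (Fin d) ℂ)
      rw [Matrix.one_mul] at h1
      have h2 : A.trace = ∑ i, (hA.eigenvalues i : ℂ) := by
        rw [h1]
        exact Finset.sum_congr rfl fun i _ => by
          rw [Matrix.one_mulVec, unitb hA i, mul_one]
      rw [h2, Complex.re_sum]
      exact Finset.sum_congr rfl fun i _ => Complex.ofReal_re _
    have hsumlam : ∑ i, hΔ.eigenvalues i = 0 := by
      rw [← hsumeig hΔ, Matrix.trace_sub, hρ.2, hσ.2, sub_self]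
      rfl
    -- positive/negative parts
    have hmaxsub : ∀ x : ℝ, max x 0 - max (-x) 0 = x := fun x => by
      rcases le_total 0 x with h | h
      · rw [max_eq_left h, max_eq_right (neg_nonpos.mpr h), sub_zero]
      · rw [max_eq_right h, max_eq_left (neg_nonneg.mpr h), zero_sub, neg_neg]
    have habs : ∀ x : ℝ, |x| = max x 0 + max (-x) 0 := fun x => by
      rcases le_total 0 x with h | h
      · rw [abs_of_nonneg h, max_eq_left h, max_eq_right (neg_nonpos.mpr h), add_zero]
      · rw [abs_of_nonpos h, max_eq_right h, max_eq_left (neg_nonneg.mpr h), zero_add]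
    set tp : ℝ := ∑ i, max (hΔ.eigenvalues i) 0 with htp
    set tm : ℝ := ∑ i, max (-(hΔ.eigenvalues i)) 0 with htm
    have htpm : tp = tm := by
      have h1 : tp - tm = ∑ i, hΔ.eigenvalues i := by
        rw [htp, htm, ← Finset.sum_sub_distrib]
        exact Finset.sum_congr rfl fun i _ => hmaxsub _
      have h2 : tp - tm = 0 := by rw [h1, hsumlam]
      linarith
    have htp0 : 0 ≤ tp := Finset.sum_nonneg fun i _ => le_max_right _ _
    have htple : tp ≤ η := by
      have h1 : traceDist ρ σ = (1 / 2 : ℝ) * ∑ i, |hΔ.eigenvalues i| := traceDist_eq_sum_abs hΔ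
      have h2 : ∑ i, |hΔ.eigenvalues i| = tp + tm := by
        rw [htp, htm, ← Finset.sum_add_distrib]
        exact Finset.sum_congr rfl fun i _ => habs _
      rw [h1, h2, ← htpm] at hdist
      linarith
    -- bound on trace of N * Δ
    have hbound1 : ((NS * (ρ - σ)).trace).re ≤ tp * (lamMax NS - lamMin NS) := by
      rw [hNΔ]
      calc ∑ i, hΔ.eigenvalues i *
              (star ⇑(hΔ.eigenvectorBasis i) ⬝ᵥ (NS *ᵥ ⇑(hΔ.eigenvectorBasis i))).re
          ≤ ∑ i, (max (hΔ.eigenvalues i) 0 * lamMax NS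
              - max (-(hΔ.eigenvalues i)) 0 * lamMin NS) := by
            refine Finset.sum_le_sum fun i _ => ?_
            obtain ⟨hqi1, hqi2⟩ := hqb i
            rcases le_total 0 (hΔ.eigenvalues i) with h | h
            · rw [max_eq_left h, max_eq_right (neg_nonpos.mpr h), zero_mul, sub_zero]
              exact mul_le_mul_of_nonneg_left hqi2 h
            · rw [max_eq_right h, max_eq_left (neg_nonneg.mpr h), zero_mul, zero_sub,
                neg_mul, neg_neg]
              nlinarith
        _ = tp * lamMax NS - tm * lamMin NS := by
            rw [Finset.sum_sub_distrib, htp, htm, Finset.sum_mul, Finset.sum_mul]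
        _ = tp * (lamMax NS - lamMin NS) := by rw [← htpm]; ring
    -- lower bound on trace of N * σ
    have hbound2 : lamMin NS ≤ ((NS * σ).trace).re := by
      have hσH : σ.IsHermitian := hσ.1.1
      have h1 : ((NS * σ).trace).re
          = ∑ i, hσH.eigenvalues i *
              (star ⇑(hσH.eigenvectorBasis i) ⬝ᵥ (NS *ᵥ ⇑(hσH.eigenvectorBasis i))).re := by
        rw [trace_mul_expand hσH NS, Complex.re_sum]
        exact Finset.sum_congr rfl fun i _ => Complex.re_ofReal_mul _ _
      have h2 : ∑ i, hσH.eigenvalues i = 1 := by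
        rw [← hsumeig hσH, hσ.2]
        rfl
      rw [h1]
      calc lamMin NS = ∑ i, hσH.eigenvalues i * lamMin NS := by
            rw [← Finset.sum_mul, h2, one_mul]
        _ ≤ _ := Finset.sum_le_sum fun i _ => by
            have := (quad_re_bounds hN (unitb hσH i)).1
            exact mul_le_mul_of_nonneg_left this (hσ.1.eigenvalues_nonneg i)
    -- assemble
    rw [key S ρ, key S σ, ← hNS]
    have hρeq : NS * ρ = NS * σ + NS * (ρ - σ) := by
      rw [← mul_add, add_sub_cancel]
    have htr : ((NS * ρ).trace).re = ((NS * σ).trace).re + ((NS * (ρ - σ)).trace).re := by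
      rw [hρeq, Matrix.trace_add, Complex.add_re]
    have h5 : ((NS * (ρ - σ)).trace).re ≤ (Real.exp ε - 1) * ((NS * σ).trace).re := by
      calc ((NS * (ρ - σ)).trace).re ≤ tp * (lamMax NS - lamMin NS) := hbound1
        _ ≤ η * (lamMax NS - lamMin NS) :=
            mul_le_mul_of_nonneg_right htple (by linarith)
        _ ≤ (Real.exp ε - 1) * lamMin NS := by nlinarith
        _ ≤ (Real.exp ε - 1) * ((NS * σ).trace).re :=
            mul_le_mul_of_nonneg_left hbound2 (by linarith)
    rw [htr]
    linarith
end

section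
/- Let M be a positive semidefinite complex d×d matrix, ε ≥ 0, and η ≥ 0. Then for all density matrices ρ and σ with D(ρ,σ) ≤ η, one has tr(M·(ρ − e^ε·σ)) ≤ η·λ_max(M) − (e^ε + η − 1)·λ_min(M). -/
open Matrix BigOperators
open scoped ComplexOrder

section AuxSqrt
open scoped MatrixOrder
private lemma psdSqrt_eq_cfc' {d : ℕ} {A : Matrix (Fin d) (Fin d) ℂ} (hA : A.PosSemidef) :
    QDP.psdSqrt hA = CFC.sqrt A := by
  rw [CFC.sqrt_eq_real_sqrt A hA.nonneg, cfcₙ_eq_cfc, hA.1.cfc_eq, Matrix.IsHermitian.cfc,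
    Unitary.conjStarAlgAut_apply]
  rfl
private lemma psdSqrt_mul_self' {d : ℕ} {A : Matrix (Fin d) (Fin d) ℂ} (hA : A.PosSemidef) :
    QDP.psdSqrt hA * QDP.psdSqrt hA = A := by
  rw [psdSqrt_eq_cfc']; exact CFC.sqrt_mul_sqrt_self A hA.nonneg
private lemma posSemidef_psdSqrt' {d : ℕ} {A : Matrix (Fin d) (Fin d) ℂ} (hA : A.PosSemidef) :
    (QDP.psdSqrt hA).PosSemidef := by
  rw [psdSqrt_eq_cfc']; exact (CFC.sqrt_nonneg A).posSemidef
private lemma eq_psdSqrt_of_sq_eq' {d : ℕ} {A B : Matrix (Fin d) (Fin d) ℂ} (hA : A.PosSemidef)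
    (hB : B.PosSemidef) (h : A ^ 2 = B) : A = QDP.psdSqrt hB := by
  rw [psdSqrt_eq_cfc']
  exact (CFC.sqrt_unique (by rw [← pow_two]; exact h) hA.nonneg).symm
end AuxSqrt

section Aux
open Matrix
open scoped ComplexOrder

private lemma diag_entry_nonneg' {d : ℕ} {A : Matrix (Fin d) (Fin d) ℂ}
    (hA : A.PosSemidef) (i : Fin d) : 0 ≤ A i i := by
  exact hA.diag_nonneg

private lemma trace_re_nonneg' {d : ℕ} {A : Matrix (Fin d) (Fin d) ℂ}
    (hA : A.PosSemidef) : 0 ≤ A.trace.re := by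
  have h : (0:ℂ) ≤ A.trace :=
    Finset.sum_nonneg fun i _ => diag_entry_nonneg' hA i
  exact (Complex.le_def.mp h).1

private lemma trace_mul_psd_re_nonneg' {d : ℕ} {A B : Matrix (Fin d) (Fin d) ℂ}
    (hA : A.PosSemidef) (hB : B.PosSemidef) : 0 ≤ (A * B).trace.re := by
  have h2 : (A * B).trace = (QDP.psdSqrt hA * B * QDP.psdSqrt hA).trace := by
    conv_lhs => rw [← psdSqrt_mul_self' hA]
    rw [Matrix.mul_assoc, Matrix.trace_mul_comm, Matrix.mul_assoc]
  rw [h2]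
  refine trace_re_nonneg' ?_
  have := hB.mul_mul_conjTranspose_same (QDP.psdSqrt hA)
  rwa [(posSemidef_psdSqrt' hA).1.eq] at this

private lemma sub_smul_one_posSemidef' {d : ℕ} {M : Matrix (Fin d) (Fin d) ℂ}
    (hM : M.IsHermitian) {c : ℝ} (hc : ∀ i, c ≤ hM.eigenvalues i) :
    (M - (c : ℂ) • 1).PosSemidef := by
  have hU1 : (hM.eigenvectorUnitary : Matrix (Fin d) (Fin d) ℂ) *
      star (hM.eigenvectorUnitary : Matrix (Fin d) (Fin d) ℂ) = 1 :=
    Matrix.mem_unitaryGroup_iff.mp hM.eigenvectorUnitary.2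
  have hdiag : diagonal (fun i => ((hM.eigenvalues i - c : ℝ) : ℂ))
      = diagonal (RCLike.ofReal ∘ hM.eigenvalues) - (c : ℂ) • 1 := by
    ext i j
    rcases eq_or_ne i j with rfl | h
    · simp [Matrix.diagonal_apply_eq, Matrix.one_apply_eq, Complex.ofReal_sub]
    · simp [Matrix.diagonal_apply_ne _ h, Matrix.one_apply_ne h]
  have key : M - (c : ℂ) • 1 =
      (hM.eigenvectorUnitary : Matrix (Fin d) (Fin d) ℂ) *
        diagonal (fun i => ((hM.eigenvalues i - c : ℝ) : ℂ)) *
        star (hM.eigenvectorUnitary : Matrix (Fin d) (Fin d) ℂ) := by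
    rw [hdiag, Matrix.mul_sub, Matrix.sub_mul, Matrix.mul_smul, mul_one,
      Matrix.smul_mul, hU1, ← Unitary.conjStarAlgAut_apply (S := ℂ), ← hM.spectral_theorem]
  rw [key]
  exact (Matrix.posSemidef_diagonal_iff.mpr fun i => by
    simpa using sub_nonneg.mpr (hc i)).mul_mul_conjTranspose_same _

private lemma smul_one_sub_posSemidef' {d : ℕ} {M : Matrix (Fin d) (Fin d) ℂ}
    (hM : M.IsHermitian) {c : ℝ} (hc : ∀ i, hM.eigenvalues i ≤ c) :
    ((c : ℂ) • 1 - M).PosSemidef := by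
  have hU1 : (hM.eigenvectorUnitary : Matrix (Fin d) (Fin d) ℂ) *
      star (hM.eigenvectorUnitary : Matrix (Fin d) (Fin d) ℂ) = 1 :=
    Matrix.mem_unitaryGroup_iff.mp hM.eigenvectorUnitary.2
  have hdiag : diagonal (fun i => ((c - hM.eigenvalues i : ℝ) : ℂ))
      = (c : ℂ) • 1 - diagonal (RCLike.ofReal ∘ hM.eigenvalues) := by
    ext i j
    rcases eq_or_ne i j with rfl | h
    · simp [Matrix.diagonal_apply_eq, Matrix.one_apply_eq, Complex.ofReal_sub]
    · simp [Matrix.diagonal_apply_ne _ h, Matrix.one_apply_ne h]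
  have key : (c : ℂ) • 1 - M =
      (hM.eigenvectorUnitary : Matrix (Fin d) (Fin d) ℂ) *
        diagonal (fun i => ((c - hM.eigenvalues i : ℝ) : ℂ)) *
        star (hM.eigenvectorUnitary : Matrix (Fin d) (Fin d) ℂ) := by
    rw [hdiag, Matrix.mul_sub, Matrix.sub_mul, Matrix.mul_smul, mul_one,
      Matrix.smul_mul, hU1, ← Unitary.conjStarAlgAut_apply (S := ℂ), ← hM.spectral_theorem]
  rw [key]
  exact (Matrix.posSemidef_diagonal_iff.mpr fun i => by
    simpa using sub_nonneg.mpr (hc i)).mul_mul_conjTranspose_same _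

end Aux

set_option maxHeartbeats 1000000

open QDP in
/-- For any density matrices `ρ, σ` at trace distance at most `η`,
`tr(M (ρ - e^ε σ)) ≤ η λ_max(M) - (e^ε + η - 1) λ_min(M)`. -/
theorem trace_diff_le_bound {d : ℕ} (hd : 1 ≤ d)
    (M : Matrix (Fin d) (Fin d) ℂ) (hM : M.PosSemidef)
    (ε η : ℝ) (hε : 0 ≤ ε) (hη : 0 ≤ η)
    (ρ σ : Matrix (Fin d) (Fin d) ℂ) (hρ : IsDensity ρ) (hσ : IsDensity σ)
    (hdist : traceDist ρ σ ≤ η) :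
    (M * (ρ - ((Real.exp ε : ℝ) : ℂ) • σ)).trace.re ≤
      η * lamMax M - (Real.exp ε + η - 1) * lamMin M := by
  classical
  have i0 : Fin d := ⟨0, hd⟩
  set e := Real.exp ε with he
  have he1 : (1:ℝ) ≤ e := Real.one_le_exp hε
  have hΔ : (ρ - σ).IsHermitian := hρ.1.1.sub hσ.1.1
  set Lmin := lamMin M with hLmin
  set Lmax := lamMax M with hLmax
  have hminle : ∀ i, Lmin ≤ hM.1.eigenvalues i := by
    intro i
    rw [hLmin, lamMin, dif_pos hM.1]
    exact ciInf_le (Finite.bddBelow_range _) i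
  have hlemax : ∀ i, hM.1.eigenvalues i ≤ Lmax := by
    intro i
    rw [hLmax, lamMax, dif_pos hM.1]
    exact le_ciSup (Finite.bddAbove_range _) i
  have hLminmax : Lmin ≤ Lmax := (hminle i0).trans (hlemax i0)
  have hMsub : (M - (Lmin:ℂ) • 1).PosSemidef := sub_smul_one_posSemidef' hM.1 hminle
  have hMsub' : ((Lmax:ℂ) • 1 - M).PosSemidef := smul_one_sub_posSemidef' hM.1 hlemax
  set U : Matrix (Fin d) (Fin d) ℂ := (hΔ.eigenvectorUnitary : Matrix (Fin d) (Fin d) ℂ)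
    with hUdef
  set lam : Fin d → ℝ := hΔ.eigenvalues with hlamdef
  have hU1 : U * star U = 1 := Matrix.mem_unitaryGroup_iff.mp hΔ.eigenvectorUnitary.2
  have hU2 : star U * U = 1 := Matrix.mem_unitaryGroup_iff'.mp hΔ.eigenvectorUnitary.2
  have hco : (RCLike.ofReal ∘ lam) = fun i => (lam i : ℂ) := by
    funext i; simp [Function.comp]
  have hspec : ρ - σ = U * diagonal (fun i => (lam i : ℂ)) * star U := by
    rw [← hco]; exact hΔ.spectral_theorem
  have conj_mul : ∀ D1 D2 : Matrix (Fin d) (Fin d) ℂ,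
      (U*D1*star U) * (U*D2*star U) = U*(D1*D2)*star U := by
    intro D1 D2
    calc (U*D1*star U) * (U*D2*star U)
        = U*D1*((star U*U)*(D2*star U)) := by simp only [Matrix.mul_assoc]
      _ = U*(D1*D2)*star U := by rw [hU2, one_mul]; simp only [Matrix.mul_assoc]
  have conj_trace : ∀ D : Matrix (Fin d) (Fin d) ℂ, (U*D*star U).trace = D.trace := by
    intro D
    rw [Matrix.trace_mul_cycle, hU2, one_mul]
  -- trace distance = half sum of |eigenvalues|
  have hBpsd : (U * diagonal (fun i => Complex.ofReal |lam i|) * star U).PosSemidef :=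
    (Matrix.posSemidef_diagonal_iff.mpr fun i => by
      simpa using abs_nonneg (lam i)).mul_mul_conjTranspose_same _
  have hB2 : (U * diagonal (fun i => Complex.ofReal |lam i|) * star U) ^ 2 = (ρ - σ)ᴴ * (ρ - σ) := by
    rw [pow_two, conj_mul, Matrix.diagonal_mul_diagonal, hΔ.eq, hspec, conj_mul,
      Matrix.diagonal_mul_diagonal]
    have hd2 : (fun i => Complex.ofReal |lam i| * Complex.ofReal |lam i|)
        = fun i => (lam i:ℂ) * (lam i:ℂ) := by
      funext i
      rw [← Complex.ofReal_mul, ← Complex.ofReal_mul, abs_mul_abs_self]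
    rw [hd2]
  have hsqrt : psdSqrt (Matrix.posSemidef_conjTranspose_mul_self (ρ - σ))
      = U * diagonal (fun i => Complex.ofReal |lam i|) * star U :=
    (eq_psdSqrt_of_sq_eq' hBpsd _ hB2).symm
  have habs : traceDist ρ σ = (1/2) * ∑ i, |lam i| := by
    rw [traceDist, hsqrt, conj_trace, Matrix.trace_diagonal, Complex.re_sum]
    simp
  -- sum of eigenvalues is zero
  have hsum0 : ∑ i, lam i = 0 := by
    have h1 : (∑ i, (lam i:ℂ)) = 0 := by
      rw [← Matrix.trace_diagonal, ← conj_trace, ← hspec, Matrix.trace_sub,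
        hρ.2, hσ.2, sub_self]
    exact_mod_cast h1
  -- trace of M * (ρ - σ)
  set Q : Matrix (Fin d) (Fin d) ℂ := star U * M * U with hQdef
  have htrMΔ : (M * (ρ - σ)).trace = ∑ i, Q i i * (lam i:ℂ) := by
    rw [hspec, ← Matrix.mul_assoc, Matrix.trace_mul_cycle, ← Matrix.mul_assoc, hQdef]
    simp [Matrix.trace, Matrix.mul_diagonal]
  have htrMΔre : (M * (ρ - σ)).trace.re = ∑ i, (Q i i).re * lam i := by
    rw [htrMΔ, Complex.re_sum]
    refine Finset.sum_congr rfl fun i _ => ?_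
    simp [Complex.mul_re]
  -- bounds on diagonal of Q
  have hc_lb : ∀ i, Lmin ≤ (Q i i).re := by
    intro i
    have hq : (star U * (M - (Lmin:ℂ)•1) * U).PosSemidef :=
      hMsub.conjTranspose_mul_mul_same U
    have hexp : star U * (M - (Lmin:ℂ)•1) * U = Q - (Lmin:ℂ)•1 := by
      rw [Matrix.mul_sub, Matrix.sub_mul, Matrix.mul_smul, mul_one, Matrix.smul_mul, hU2,
        hQdef]
    rw [hexp] at hq
    have h0 := (Complex.le_def.mp (diag_entry_nonneg' hq i)).1
    simp only [Matrix.sub_apply, Matrix.smul_apply, Matrix.one_apply_eq, smul_eq_mul,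
      mul_one, Complex.sub_re, Complex.ofReal_re, Complex.zero_re] at h0
    linarith
  have hc_ub : ∀ i, (Q i i).re ≤ Lmax := by
    intro i
    have hq : (star U * ((Lmax:ℂ)•1 - M) * U).PosSemidef :=
      hMsub'.conjTranspose_mul_mul_same U
    have hexp : star U * ((Lmax:ℂ)•1 - M) * U = (Lmax:ℂ)•1 - Q := by
      rw [Matrix.mul_sub, Matrix.sub_mul, Matrix.mul_smul, mul_one, Matrix.smul_mul, hU2,
        hQdef]
    rw [hexp] at hq
    have h0 := (Complex.le_def.mp (diag_entry_nonneg' hq i)).1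
    simp only [Matrix.sub_apply, Matrix.smul_apply, Matrix.one_apply_eq, smul_eq_mul,
      mul_one, Complex.sub_re, Complex.ofReal_re, Complex.zero_re] at h0
    linarith
  -- positive and negative parts
  set p : Fin d → ℝ := fun i => max (lam i) 0 with hp
  set m : Fin d → ℝ := fun i => max (-lam i) 0 with hm
  have hpm : ∀ i, lam i = p i - m i := fun i =>
    (max_zero_sub_max_neg_zero_eq_self _).symm
  have habs2 : ∀ i, |lam i| = p i + m i := fun i =>
    (max_zero_add_max_neg_zero_eq_abs_self _).symm
  have hp0 : ∀ i, 0 ≤ p i := fun i => le_max_right _ _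
  have hm0 : ∀ i, 0 ≤ m i := fun i => le_max_right _ _
  set P := ∑ i, p i with hP
  set Nm := ∑ i, m i with hN
  have hPN0 : P - Nm = 0 := by
    rw [hP, hN, ← Finset.sum_sub_distrib, ← hsum0]
    exact Finset.sum_congr rfl fun i _ => (hpm i).symm
  have hPNS : P + Nm = ∑ i, |lam i| := by
    rw [hP, hN, ← Finset.sum_add_distrib]
    exact Finset.sum_congr rfl fun i _ => (habs2 i).symm
  have hSη : ∑ i, |lam i| ≤ 2 * η := by
    rw [habs] at hdist; linarith
  have hPη : P ≤ η := by linarith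
  have hNmP : Nm = P := by linarith
  -- main sum bound
  have hsumbd : ∑ i, (Q i i).re * lam i ≤ Lmax * P - Lmin * P := by
    have : ∀ i ∈ Finset.univ, (Q i i).re * lam i ≤ Lmax * p i - Lmin * m i := by
      intro i _
      rw [hpm i, mul_sub]
      have h1 : (Q i i).re * p i ≤ Lmax * p i :=
        mul_le_mul_of_nonneg_right (hc_ub i) (hp0 i)
      have h2 : Lmin * m i ≤ (Q i i).re * m i :=
        mul_le_mul_of_nonneg_right (hc_lb i) (hm0 i)
      linarith
    calc ∑ i, (Q i i).re * lam i ≤ ∑ i, (Lmax * p i - Lmin * m i) :=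
          Finset.sum_le_sum this
      _ = Lmax * P - Lmin * Nm := by
          rw [Finset.sum_sub_distrib, ← Finset.mul_sum, ← Finset.mul_sum]
      _ = Lmax * P - Lmin * P := by rw [hNmP]
  have hA : (M * (ρ - σ)).trace.re ≤ η * Lmax - η * Lmin := by
    rw [htrMΔre]
    nlinarith [mul_nonneg (sub_nonneg.mpr hPη) (sub_nonneg.mpr hLminmax)]
  -- bound on tr(Mσ)
  have hσb : Lmin ≤ (M * σ).trace.re := by
    have h0 := trace_mul_psd_re_nonneg' hMsub hσ.1
    have hexp : (M - (Lmin:ℂ)•1) * σ = M * σ - (Lmin:ℂ)•σ := by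
      rw [Matrix.sub_mul, Matrix.smul_mul, one_mul]
    rw [hexp, Matrix.trace_sub, Matrix.trace_smul, hσ.2] at h0
    simp only [smul_eq_mul, mul_one, Complex.sub_re, Complex.ofReal_re] at h0
    linarith
  -- decompose the target trace
  have hdecomp : (M * (ρ - ((e:ℝ):ℂ) • σ)).trace.re
      = (M * (ρ - σ)).trace.re + (1 - e) * (M * σ).trace.re := by
    have hmat : M * (ρ - (e:ℂ) • σ) = M * (ρ - σ) + ((1:ℂ) - (e:ℂ)) • (M * σ) := by
      rw [Matrix.mul_sub, Matrix.mul_sub, Matrix.mul_smul, sub_smul, one_smul]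
      abel
    rw [hmat, Matrix.trace_add, Matrix.trace_smul, Complex.add_re, smul_eq_mul,
      Complex.mul_re]
    simp
  rw [hdecomp]
  have hB : (1 - e) * (M * σ).trace.re ≤ (1 - e) * Lmin := by
    nlinarith [hσb, he1]
  nlinarith [hA, hB]
end
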